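/- Let E be a compact subset of ℝ² that is purely unrectifiable. Then for every r > 0 and M > 0, the rectifiability constants satisfy lim_{ε→0} R_E(ε, r, M) = 0. -/

import Mathlib

open MeasureTheory
open scoped ENNReal NNReal

/-- The dot product on ℝ². -/
def dot (x y : ℝ × ℝ) : ℝ := x.1 * y.1 + x.2 * y.2

/-- The rectifiability constant `R_E(ε, r, M)` of a set `E ⊆ ℝ²`: the supremum, over
orthonormal pairs ω₁, ω₂, over `M`-Lipschitz functions `F : ℝ → ℝ` and over intervals
`J = [a,b]` of length at least `r`, of
`m({x ∈ J : x·ω₁ + (F x + y)·ω₂ ∈ E for some |y| ≤ ε}) / m(J)`. -/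
noncomputable def rectConst (E : Set (ℝ × ℝ)) (ε r M : ℝ) : ℝ :=
  sSup {u : ℝ | ∃ (ω₁ ω₂ : ℝ × ℝ) (F : ℝ → ℝ) (a b : ℝ),
    dot ω₁ ω₁ = 1 ∧ dot ω₂ ω₂ = 1 ∧ dot ω₁ ω₂ = 0 ∧
    LipschitzWith (Real.toNNReal M) F ∧ r ≤ b - a ∧
    u = (volume {x : ℝ | x ∈ Set.Icc a b ∧
          ∃ y : ℝ, |y| ≤ ε ∧ x • ω₁ + (F x + y) • ω₂ ∈ E}).toReal / (b - a)}

open Filter Topology Set BoundedContinuousFunction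

/-- The defining set of `rectConst`. -/
def rectSet (E : Set (ℝ × ℝ)) (ε r M : ℝ) : Set ℝ :=
  {u : ℝ | ∃ (ω₁ ω₂ : ℝ × ℝ) (F : ℝ → ℝ) (a b : ℝ),
    dot ω₁ ω₁ = 1 ∧ dot ω₂ ω₂ = 1 ∧ dot ω₁ ω₂ = 0 ∧
    LipschitzWith (Real.toNNReal M) F ∧ r ≤ b - a ∧
    u = (volume {x : ℝ | x ∈ Set.Icc a b ∧
          ∃ y : ℝ, |y| ≤ ε ∧ x • ω₁ + (F x + y) • ω₂ ∈ E}).toReal / (b - a)}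

lemma rectConst_eq (E : Set (ℝ × ℝ)) (ε r M : ℝ) :
    rectConst E ε r M = sSup (rectSet E ε r M) := rfl

lemma dot_expand (ω₁ ω₂ : ℝ × ℝ) (h1 : dot ω₁ ω₁ = 1) (h2 : dot ω₂ ω₂ = 1)
    (h12 : dot ω₁ ω₂ = 0) (x s : ℝ) :
    (x • ω₁ + s • ω₂).1 ^ 2 + (x • ω₁ + s • ω₂).2 ^ 2 = x ^ 2 + s ^ 2 := by
  simp only [dot] at h1 h2 h12
  simp only [Prod.fst_add, Prod.snd_add, Prod.smul_fst, Prod.smul_snd, smul_eq_mul]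
  linear_combination x ^ 2 * h1 + s ^ 2 * h2 + 2 * x * s * h12

lemma rectSet_nonempty (E : Set (ℝ × ℝ)) (ε : ℝ) {r : ℝ} (hr : 0 < r) (M : ℝ) :
    (rectSet E ε r M).Nonempty := by
  refine ⟨_, (1, 0), (0, 1), fun _ => 0, 0, r, by simp [dot], by simp [dot], by simp [dot],
    LipschitzWith.const' 0, by linarith, rfl⟩

lemma rectSet_mem_Icc (E : Set (ℝ × ℝ)) (ε : ℝ) {r : ℝ} (hr : 0 < r) (M : ℝ) {u : ℝ}
    (hu : u ∈ rectSet E ε r M) : 0 ≤ u ∧ u ≤ 1 := by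
  obtain ⟨ω₁, ω₂, F, a, b, -, -, -, -, hab, rfl⟩ := hu
  have hba : 0 < b - a := lt_of_lt_of_le hr hab
  have hsub : {x : ℝ | x ∈ Set.Icc a b ∧
      ∃ y : ℝ, |y| ≤ ε ∧ x • ω₁ + (F x + y) • ω₂ ∈ E} ⊆ Set.Icc a b := fun x hx => hx.1
  have hle : volume {x : ℝ | x ∈ Set.Icc a b ∧
      ∃ y : ℝ, |y| ≤ ε ∧ x • ω₁ + (F x + y) • ω₂ ∈ E} ≤ ENNReal.ofReal (b - a) :=
    le_of_le_of_eq (measure_mono hsub) Real.volume_Icc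
  have htr : (volume {x : ℝ | x ∈ Set.Icc a b ∧
      ∃ y : ℝ, |y| ≤ ε ∧ x • ω₁ + (F x + y) • ω₂ ∈ E}).toReal ≤ b - a := by
    have := ENNReal.toReal_mono (by simp) hle
    simpa [ENNReal.toReal_ofReal hba.le] using this
  constructor
  · positivity
  · rw [div_le_one hba]; exact htr

lemma rectSet_bddAbove (E : Set (ℝ × ℝ)) (ε : ℝ) {r : ℝ} (hr : 0 < r) (M : ℝ) :
    BddAbove (rectSet E ε r M) :=
  ⟨1, fun _ hu => (rectSet_mem_Icc E ε hr M hu).2⟩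

lemma rectConst_nonneg (E : Set (ℝ × ℝ)) (ε : ℝ) {r : ℝ} (hr : 0 < r) (M : ℝ) :
    0 ≤ rectConst E ε r M := by
  obtain ⟨u, hu⟩ := rectSet_nonempty E ε hr M
  exact le_trans (rectSet_mem_Icc E ε hr M hu).1 (le_csSup (rectSet_bddAbove E ε hr M) hu)

lemma rectConst_mono (E : Set (ℝ × ℝ)) {ε ε' : ℝ} (h : ε ≤ ε') {r : ℝ} (hr : 0 < r) (M : ℝ) :
    rectConst E ε r M ≤ rectConst E ε' r M := by
  apply csSup_le (rectSet_nonempty E ε hr M)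
  rintro u ⟨ω₁, ω₂, F, a, b, h1, h2, h12, hF, hab, rfl⟩
  refine le_csSup_of_le (rectSet_bddAbove E ε' hr M)
    (⟨ω₁, ω₂, F, a, b, h1, h2, h12, hF, hab, rfl⟩ : _ ∈ rectSet E ε' r M) ?_
  have hba : 0 < b - a := lt_of_lt_of_le hr hab
  have hsub : {x : ℝ | x ∈ Set.Icc a b ∧ ∃ y : ℝ, |y| ≤ ε ∧ x • ω₁ + (F x + y) • ω₂ ∈ E} ⊆
      {x : ℝ | x ∈ Set.Icc a b ∧ ∃ y : ℝ, |y| ≤ ε' ∧ x • ω₁ + (F x + y) • ω₂ ∈ E} := by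
    rintro x ⟨hx, y, hy, hxy⟩; exact ⟨hx, y, hy.trans h, hxy⟩
  have hfin : volume {x : ℝ | x ∈ Set.Icc a b ∧
      ∃ y : ℝ, |y| ≤ ε' ∧ x • ω₁ + (F x + y) • ω₂ ∈ E} ≠ ⊤ :=
    ne_top_of_le_ne_top ENNReal.ofReal_ne_top
      (le_of_le_of_eq (measure_mono fun x hx => hx.1) Real.volume_Icc)
  have := ENNReal.toReal_mono hfin (measure_mono hsub)
  gcongr


lemma omega_bounds (ω : ℝ × ℝ) (h : dot ω ω = 1) :
    ((-1, -1) : ℝ × ℝ) ≤ ω ∧ ω ≤ (1, 1) := by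
  simp only [dot] at h
  refine ⟨⟨show (-1:ℝ) ≤ ω.1 from ?_, show (-1:ℝ) ≤ ω.2 from ?_⟩,
      show ω.1 ≤ (1:ℝ) from ?_, show ω.2 ≤ (1:ℝ) from ?_⟩ <;>
    nlinarith [sq_nonneg (ω.1 - 1), sq_nonneg (ω.1 + 1), sq_nonneg (ω.2 - 1),
      sq_nonneg (ω.2 + 1), sq_nonneg ω.1, sq_nonneg ω.2]

lemma tendsto_dot {f g : ℕ → ℝ × ℝ} {u v : ℝ × ℝ}
    (hf : Filter.Tendsto f atTop (nhds u)) (hg : Filter.Tendsto g atTop (nhds v)) :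
    Filter.Tendsto (fun n => dot (f n) (g n)) atTop (nhds (dot u v)) := by
  have hf1 : Filter.Tendsto (fun n => (f n).1) atTop (nhds u.1) := (continuous_fst.tendsto u).comp hf
  have hf2 : Filter.Tendsto (fun n => (f n).2) atTop (nhds u.2) := (continuous_snd.tendsto u).comp hf
  have hg1 : Filter.Tendsto (fun n => (g n).1) atTop (nhds v.1) := (continuous_fst.tendsto v).comp hg
  have hg2 : Filter.Tendsto (fun n => (g n).2) atTop (nhds v.2) := (continuous_snd.tendsto v).comp hg
  simp only [dot]
  exact (hf1.mul hg1).add (hf2.mul hg2)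

set_option maxHeartbeats 2000000 in
/-- The core compactness lemma. -/
lemma core (E : Set (ℝ × ℝ)) (hE : IsCompact E)
    (hunrect : ∀ (ω₁ ω₂ : ℝ × ℝ), dot ω₁ ω₁ = 1 → dot ω₂ ω₂ = 1 → dot ω₁ ω₂ = 0 →
      ∀ (F : ℝ → ℝ) (M : ℝ≥0), LipschitzWith M F →
        volume {x : ℝ | x • ω₁ + F x • ω₂ ∈ E} = 0)
    {r : ℝ} (hr : 0 < r) {M : ℝ} (hM : 0 < M) {δ : ℝ} (hδ : 0 < δ) :
    ∃ ε > 0, rectConst E ε r M < δ := by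
  by_contra hcon
  push_neg at hcon
  have hM'coe : ((Real.toNNReal M : ℝ≥0) : ℝ) = M := Real.coe_toNNReal M hM.le
  have hkey : ∀ n : ℕ, ∃ u ∈ rectSet E (1 / ((n : ℝ) + 1)) r M, δ / 2 < u := by
    intro n
    have hp : (0:ℝ) < 1 / ((n : ℝ) + 1) := by positivity
    refine exists_lt_of_lt_csSup (rectSet_nonempty E _ hr M) ?_
    calc δ / 2 < δ := by linarith
    _ ≤ rectConst E (1 / ((n : ℝ) + 1)) r M := hcon _ hp
  have hkey2 : ∀ n : ℕ, ∃ (ω₁ ω₂ : ℝ × ℝ) (F : ℝ → ℝ) (a b : ℝ),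
      dot ω₁ ω₁ = 1 ∧ dot ω₂ ω₂ = 1 ∧ dot ω₁ ω₂ = 0 ∧
      LipschitzWith (Real.toNNReal M) F ∧ r ≤ b - a ∧
      δ / 2 < (volume {x : ℝ | x ∈ Set.Icc a b ∧
        ∃ y : ℝ, |y| ≤ 1 / ((n : ℝ) + 1) ∧ x • ω₁ + (F x + y) • ω₂ ∈ E}).toReal / (b - a) := by
    intro n
    obtain ⟨u, ⟨ω₁, ω₂, F, a, b, h1, h2, h12, hF, hab, rfl⟩, hlt⟩ := hkey n
    exact ⟨ω₁, ω₂, F, a, b, h1, h2, h12, hF, hab, hlt⟩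
  choose ω₁ ω₂ F a b h1 h2 h12 hF hab hratio using hkey2
  set A : ℕ → Set ℝ := fun n => {x : ℝ | x ∈ Set.Icc (a n) (b n) ∧
    ∃ y : ℝ, |y| ≤ 1 / ((n : ℝ) + 1) ∧ x • ω₁ n + (F n x + y) • ω₂ n ∈ E} with hAdef
  have hratio' : ∀ n, δ / 2 < (volume (A n)).toReal / (b n - a n) := hratio
  -- bound on E
  obtain ⟨R₀, hR₀⟩ := hE.isBounded.subset_closedBall 0
  set R : ℝ := 2 * |R₀| + 1 with hRdef
  have hR : 0 < R := by positivity
  have hEbd : ∀ v ∈ E, v.1 ^ 2 + v.2 ^ 2 ≤ R ^ 2 := by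
    intro v hv
    have h := hR₀ hv
    rw [Metric.mem_closedBall, dist_zero_right] at h
    have hv1 : |v.1| ≤ |R₀| := by
      rw [← Real.norm_eq_abs]
      exact (norm_fst_le v).trans (h.trans (le_abs_self _))
    have hv2 : |v.2| ≤ |R₀| := by
      rw [← Real.norm_eq_abs]
      exact (norm_snd_le v).trans (h.trans (le_abs_self _))
    nlinarith [sq_abs v.1, sq_abs v.2, abs_nonneg v.1, abs_nonneg v.2, abs_nonneg R₀]
  -- elements of `A n` are bounded
  have hmemA : ∀ n, ∀ x ∈ A n, |x| ≤ R ∧ |F n x| ≤ R + 1 := by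
    intro n x hx
    obtain ⟨hxI, y, hy, hmem⟩ := hx
    have hid := dot_expand (ω₁ n) (ω₂ n) (h1 n) (h2 n) (h12 n) x (F n x + y)
    have hb := hEbd _ hmem
    rw [hid] at hb
    have hn1 : (0:ℝ) < (n : ℝ) + 1 := by positivity
    have hyle : |y| ≤ 1 := hy.trans (by rw [div_le_one hn1]; linarith [(Nat.cast_nonneg n : (0:ℝ) ≤ (n:ℝ))])
    have hx1 : |x| ≤ R := by
      nlinarith [sq_abs x, sq_nonneg (F n x + y), abs_nonneg x]
    refine ⟨hx1, ?_⟩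
    have h3 : |F n x + y| ≤ R := by
      nlinarith [sq_abs (F n x + y), sq_nonneg x, abs_nonneg (F n x + y)]
    have h4 : |F n x| ≤ |F n x + y| + |y| := by
      have := abs_add_le (F n x + y) (-y)
      simpa using this
    linarith [abs_nonneg y]
  have hAsub : ∀ n, A n ⊆ Set.Icc (-R) R := by
    intro n x hx
    have := (hmemA n x hx).1
    rw [abs_le] at this
    exact Set.mem_Icc.mpr this
  have hvfin : ∀ n, volume (A n) ≠ ⊤ := fun n =>
    ne_top_of_le_ne_top ENNReal.ofReal_ne_top
      (le_of_le_of_eq (measure_mono (hAsub n)) Real.volume_Icc)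
  have hvle : ∀ n, (volume (A n)).toReal ≤ 2 * R := by
    intro n
    have h := ENNReal.toReal_mono ENNReal.ofReal_ne_top
      (le_of_le_of_eq (measure_mono (hAsub n)) Real.volume_Icc)
    rw [ENNReal.toReal_ofReal (by linarith)] at h
    linarith
  have hba : ∀ n, 0 < b n - a n := fun n => lt_of_lt_of_le hr (hab n)
  have hvgt : ∀ n, δ / 2 * (b n - a n) < (volume (A n)).toReal := by
    intro n
    have h := hratio' n
    rw [lt_div_iff₀ (hba n)] at h
    linarith
  have hlen : ∀ n, b n - a n ≤ 4 * R / δ := by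
    intro n
    have h := (hvgt n).trans_le (hvle n)
    rw [le_div_iff₀ hδ]
    nlinarith
  have hAne : ∀ n, (A n).Nonempty := by
    intro n
    rcases Set.eq_empty_or_nonempty (A n) with h | h
    · exfalso
      have h2 := hvgt n
      rw [h] at h2
      simp only [measure_empty, ENNReal.toReal_zero] at h2
      nlinarith [hba n]
    · exact h
  choose xr hxr using hAne
  set C : ℝ := R + 4 * R / δ + 1 with hCdef
  have hC : 0 < C := by positivity
  have hRC : R ≤ C := by
    have : (0:ℝ) ≤ 4 * R / δ := by positivity
    rw [hCdef]; linarith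
  have hIccsub : ∀ n, Set.Icc (a n) (b n) ⊆ Set.Icc (-C) C := by
    intro n
    obtain ⟨⟨hax, hxb⟩, -⟩ := hxr n
    have hxR := (hmemA n _ (hxr n)).1
    rw [abs_le] at hxR
    have hl := hlen n
    apply Set.Icc_subset_Icc
    · rw [hCdef]; linarith
    · rw [hCdef]; linarith
  set B : ℝ := R + 1 + M * (2 * C) with hBdef
  have hFbd : ∀ n, ∀ x : ℝ, x ∈ Set.Icc (-C) C → |F n x| ≤ B := by
    intro n x hx
    have hlip := (hF n).dist_le_mul x (xr n)
    rw [Real.dist_eq, Real.dist_eq, hM'coe] at hlip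
    have hxr1 := (hmemA n _ (hxr n)).1
    have hxr2 := (hmemA n _ (hxr n)).2
    rw [abs_le] at hxr1
    obtain ⟨hx1, hx2⟩ := hx
    have hdist : |x - xr n| ≤ 2 * C := by
      rw [abs_le]
      constructor <;> nlinarith
    have h5 : M * |x - xr n| ≤ M * (2 * C) := mul_le_mul_of_nonneg_left hdist hM.le
    have h6 : |F n x| - |F n (xr n)| ≤ |F n x - F n (xr n)| := abs_sub_abs_le_abs_sub _ _
    rw [hBdef]
    linarith
  -- compactness of `A n`
  have hAcomp : ∀ m, IsCompact (A m) := by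
    intro m
    have hg : Continuous fun p : ℝ × ℝ => p.1 • ω₁ m + (F m p.1 + p.2) • ω₂ m :=
      (continuous_fst.smul continuous_const).add
        ((((hF m).continuous.comp continuous_fst).add continuous_snd).smul continuous_const)
    have heq : A m = Prod.fst '' ((Set.Icc (a m) (b m) ×ˢ
        Set.Icc (-(1 / ((m : ℝ) + 1))) (1 / ((m : ℝ) + 1))) ∩
        (fun p : ℝ × ℝ => p.1 • ω₁ m + (F m p.1 + p.2) • ω₂ m) ⁻¹' E) := by
      ext x
      constructor
      · rintro ⟨hxI, y, hy, hmem⟩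
        exact ⟨(x, y), ⟨⟨hxI, Set.mem_Icc.mpr (abs_le.mp hy)⟩, hmem⟩, rfl⟩
      · rintro ⟨⟨x', y⟩, ⟨⟨hxI, hyI⟩, hmem⟩, rfl⟩
        exact ⟨hxI, y, abs_le.mpr (Set.mem_Icc.mp hyI), hmem⟩
    rw [heq]
    exact (((isCompact_Icc.prod isCompact_Icc).inter_right
      (hE.isClosed.preimage hg)).image continuous_fst)
  -- first subsequence: directions and endpoints
  have hω := omega_bounds
  have htmem : ∀ n, (ω₁ n, ω₂ n, a n, b n) ∈
      Set.Icc (((-1, -1), (-1, -1), -C, -C) : (ℝ × ℝ) × (ℝ × ℝ) × ℝ × ℝ) ((1, 1), (1, 1), C, C) := by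
    intro n
    have hb1 := hω _ (h1 n)
    have hb2 := hω _ (h2 n)
    have haC : a n ∈ Set.Icc (-C) C := hIccsub n ⟨le_rfl, by linarith [hba n]⟩
    have hbC : b n ∈ Set.Icc (-C) C := hIccsub n ⟨by linarith [hba n], le_rfl⟩
    exact ⟨⟨hb1.1, hb2.1, haC.1, hbC.1⟩, ⟨hb1.2, hb2.2, haC.2, hbC.2⟩⟩
  obtain ⟨⟨W₁, W₂, A0, B0⟩, -, φ₁, hφ₁, hconv⟩ := isCompact_Icc.tendsto_subseq htmem
  have hconvω₁ : Filter.Tendsto (fun n => ω₁ (φ₁ n)) atTop (nhds W₁) :=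
    (continuous_fst.tendsto _).comp hconv
  have hconvω₂ : Filter.Tendsto (fun n => ω₂ (φ₁ n)) atTop (nhds W₂) :=
    ((continuous_fst.comp continuous_snd).tendsto _).comp hconv
  have hconva : Filter.Tendsto (fun n => a (φ₁ n)) atTop (nhds A0) :=
    ((continuous_fst.comp (continuous_snd.comp continuous_snd)).tendsto _).comp hconv
  have hconvb : Filter.Tendsto (fun n => b (φ₁ n)) atTop (nhds B0) :=
    ((continuous_snd.comp (continuous_snd.comp continuous_snd)).tendsto _).comp hconv
  have hW1 : dot W₁ W₁ = 1 := by
    refine tendsto_nhds_unique (tendsto_dot hconvω₁ hconvω₁) ?_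
    have : (fun n => dot (ω₁ (φ₁ n)) (ω₁ (φ₁ n))) = fun _ => (1:ℝ) := funext fun n => h1 _
    rw [this]; exact tendsto_const_nhds
  have hW2 : dot W₂ W₂ = 1 := by
    refine tendsto_nhds_unique (tendsto_dot hconvω₂ hconvω₂) ?_
    have : (fun n => dot (ω₂ (φ₁ n)) (ω₂ (φ₁ n))) = fun _ => (1:ℝ) := funext fun n => h2 _
    rw [this]; exact tendsto_const_nhds
  have hW12 : dot W₁ W₂ = 0 := by
    refine tendsto_nhds_unique (tendsto_dot hconvω₁ hconvω₂) ?_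
    have : (fun n => dot (ω₁ (φ₁ n)) (ω₂ (φ₁ n))) = fun _ => (0:ℝ) := funext fun n => h12 _
    rw [this]; exact tendsto_const_nhds
  have hrAB : r ≤ B0 - A0 :=
    ge_of_tendsto (hconvb.sub hconva) (Filter.Eventually.of_forall fun n => hab (φ₁ n))
  -- second subsequence: Arzelà–Ascoli
  set K : Set ℝ := Set.Icc (-C) C with hKdef
  haveI : CompactSpace K := isCompact_iff_compactSpace.mp isCompact_Icc
  have hFcont : ∀ n, Continuous fun x : K => F n x :=
    fun n => ((hF n).continuous).comp continuous_subtype_val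
  set Fb : ℕ → (K →ᵇ ℝ) := fun n =>
    BoundedContinuousFunction.mkOfCompact ⟨fun x : K => F n x, hFcont n⟩ with hFbdef
  set 𝒜 : Set (K →ᵇ ℝ) := {f | LipschitzWith (Real.toNNReal M) ⇑f ∧ ∀ x : K, |f x| ≤ B} with h𝒜def
  have h𝒜closed : IsClosed 𝒜 := by
    apply IsSeqClosed.isClosed
    intro f f₀ hmem htend
    have hpt : ∀ x : K, Filter.Tendsto (fun k => f k x) atTop (nhds (f₀ x)) := fun x =>
      (BoundedContinuousFunction.tendsto_iff_tendstoUniformly.mp htend).tendsto_at x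
    constructor
    · apply LipschitzWith.of_dist_le_mul
      intro x y
      refine le_of_tendsto ((hpt x).dist (hpt y)) (Filter.Eventually.of_forall fun k => ?_)
      exact (hmem k).1.dist_le_mul x y
    · intro x
      exact le_of_tendsto (hpt x).abs (Filter.Eventually.of_forall fun k => (hmem k).2 x)
  have h𝒜cpt : IsCompact 𝒜 := by
    refine BoundedContinuousFunction.arzela_ascoli₂ (Set.Icc (-B) B) isCompact_Icc 𝒜 h𝒜closed
      (fun f x hf => Set.mem_Icc.mpr (abs_le.mp (hf.2 x))) ?_
    refine Metric.equicontinuous_of_continuity_modulus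
      (fun d => ((Real.toNNReal M : ℝ≥0) : ℝ) * d) ?_ _ ?_
    · have h : Filter.Tendsto (fun d : ℝ => ((Real.toNNReal M : ℝ≥0) : ℝ) * d) (nhds 0)
        (nhds (((Real.toNNReal M : ℝ≥0) : ℝ) * 0)) := tendsto_const_nhds.mul tendsto_id
      simpa using h
    · rintro x y ⟨f, hf⟩
      exact hf.1.dist_le_mul x y
  have hFbmem : ∀ n, Fb n ∈ 𝒜 := by
    intro n
    constructor
    · have hsub : LipschitzWith 1 (Subtype.val : K → ℝ) := LipschitzWith.subtype_val _
      have h := (hF n).comp hsub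
      rw [mul_one] at h
      exact h
    · exact fun x => hFbd n x x.2
  obtain ⟨G, hG𝒜, φ₂, hφ₂, hGconv⟩ :=
    h𝒜cpt.tendsto_subseq (x := fun n => Fb (φ₁ n)) (fun n => hFbmem (φ₁ n))
  -- the limit Lipschitz function
  set f₀ : ℝ → ℝ := fun x => if h : x ∈ K then G ⟨x, h⟩ else 0 with hf₀def
  have hf₀lip : LipschitzOnWith (Real.toNNReal M) f₀ K := by
    rw [lipschitzOnWith_iff_restrict]
    have hre : K.restrict f₀ = ⇑G := by
      funext x
      show f₀ x = G x
      simp only [hf₀def]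
      rw [dif_pos x.2]
    rw [show K.domRestrict f₀ = K.restrict f₀ from rfl, hre]
    exact hG𝒜.1
  obtain ⟨Flim, hFlimlip, hEqOn⟩ := hf₀lip.extend_real
  have h0 : volume {x : ℝ | x • W₁ + Flim x • W₂ ∈ E} = 0 :=
    hunrect W₁ W₂ hW1 hW2 hW12 Flim (Real.toNNReal M) hFlimlip
  -- the limsup set
  set U : ℕ → Set ℝ := fun N => ⋃ k, A (φ₁ (φ₂ (k + N))) with hUdef
  have hUm : ∀ N, NullMeasurableSet (U N) volume := fun N =>
    (MeasurableSet.iUnion fun k => (hAcomp _).measurableSet).nullMeasurableSet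
  have hUanti : Antitone U := by
    intro N N' hNN'
    refine Set.iUnion_subset fun k => ?_
    have h : k + N' = (k + (N' - N)) + N := by omega
    rw [h]
    exact Set.subset_iUnion (fun j => A (φ₁ (φ₂ (j + N)))) (k + (N' - N))
  have hUfin : volume (U 0) ≠ ⊤ := ne_top_of_le_ne_top ENNReal.ofReal_ne_top
    (le_of_le_of_eq (measure_mono (Set.iUnion_subset fun k => hAsub _)) Real.volume_Icc)
  have hAvol : ∀ m, ENNReal.ofReal (δ / 2 * r) ≤ volume (A m) := by
    intro m
    have h1' : δ / 2 * r ≤ (volume (A m)).toReal := by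
      have h2' : δ / 2 * r ≤ δ / 2 * (b m - a m) := by nlinarith [hab m]
      linarith [hvgt m]
    calc ENNReal.ofReal (δ / 2 * r) ≤ ENNReal.ofReal ((volume (A m)).toReal) :=
        ENNReal.ofReal_le_ofReal h1'
    _ = volume (A m) := ENNReal.ofReal_toReal (hvfin m)
  have hUvol : ∀ N, ENNReal.ofReal (δ / 2 * r) ≤ volume (U N) := fun N =>
    le_trans (hAvol _) (measure_mono (Set.subset_iUnion (fun k => A (φ₁ (φ₂ (k + N)))) 0))
  have hTvol : ENNReal.ofReal (δ / 2 * r) ≤ volume (⋂ N, U N) := by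
    rw [Directed.measure_iInter hUm hUanti.directed_ge ⟨0, hUfin⟩]
    exact le_iInf fun N => hUvol N
  -- the limsup set is contained in the graph set
  have hTZ : (⋂ N, U N) ⊆ {x : ℝ | x • W₁ + Flim x • W₂ ∈ E} := by
    intro x hx
    have hfreq : ∃ᶠ m in atTop, x ∈ A (φ₁ (φ₂ m)) := by
      rw [Filter.frequently_atTop]
      intro N
      have hxN := Set.mem_iInter.mp hx N
      obtain ⟨k, hk⟩ := Set.mem_iUnion.mp hxN
      exact ⟨k + N, Nat.le_add_left N k, hk⟩
    obtain ⟨ψ, hψ, hψmem⟩ := Filter.extraction_of_frequently_atTop hfreq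
    have hxK : x ∈ K := hIccsub _ (hψmem 0).1
    have hy : ∀ k, ∃ y : ℝ, |y| ≤ 1 / ((φ₁ (φ₂ (ψ k)) : ℝ) + 1) ∧
        x • ω₁ (φ₁ (φ₂ (ψ k))) + (F (φ₁ (φ₂ (ψ k))) x + y) • ω₂ (φ₁ (φ₂ (ψ k))) ∈ E :=
      fun k => (hψmem k).2
    choose y hy1 hy2 using hy
    have hy0 : Filter.Tendsto y atTop (nhds 0) := by
      apply squeeze_zero_norm (a := fun k : ℕ => 1 / ((k : ℝ) + 1)) (fun k => ?_)
        tendsto_one_div_add_atTop_nhds_zero_nat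
      rw [Real.norm_eq_abs]
      refine (hy1 k).trans ?_
      apply one_div_le_one_div_of_le (by positivity)
      have hk : k ≤ φ₁ (φ₂ (ψ k)) := ((hφ₁.comp hφ₂).comp hψ).le_apply
      have : (k : ℝ) ≤ (φ₁ (φ₂ (ψ k)) : ℝ) := Nat.cast_le.mpr hk
      linarith
    have hGψ : Filter.Tendsto (fun k => Fb (φ₁ (φ₂ (ψ k)))) atTop (nhds G) :=
      hGconv.comp hψ.tendsto_atTop
    have hFx : Filter.Tendsto (fun k => F (φ₁ (φ₂ (ψ k))) x) atTop (nhds (G ⟨x, hxK⟩)) :=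
      (BoundedContinuousFunction.tendsto_iff_tendstoUniformly.mp hGψ).tendsto_at ⟨x, hxK⟩
    have hFlimx : Flim x = G ⟨x, hxK⟩ := by
      rw [← hEqOn hxK]
      simp only [hf₀def]
      rw [dif_pos hxK]
    have hω₁ψ : Filter.Tendsto (fun k => ω₁ (φ₁ (φ₂ (ψ k)))) atTop (nhds W₁) :=
      (hconvω₁.comp hφ₂.tendsto_atTop).comp hψ.tendsto_atTop
    have hω₂ψ : Filter.Tendsto (fun k => ω₂ (φ₁ (φ₂ (ψ k)))) atTop (nhds W₂) :=
      (hconvω₂.comp hφ₂.tendsto_atTop).comp hψ.tendsto_atTop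
    have hv : Filter.Tendsto (fun k => x • ω₁ (φ₁ (φ₂ (ψ k))) +
        (F (φ₁ (φ₂ (ψ k))) x + y k) • ω₂ (φ₁ (φ₂ (ψ k)))) atTop
        (nhds (x • W₁ + (G ⟨x, hxK⟩ + 0) • W₂)) :=
      (tendsto_const_nhds.smul hω₁ψ).add ((hFx.add hy0).smul hω₂ψ)
    have hmemE : x • W₁ + (G ⟨x, hxK⟩ + 0) • W₂ ∈ E :=
      hE.isClosed.mem_of_tendsto hv (Filter.Eventually.of_forall hy2)
    show x • W₁ + Flim x • W₂ ∈ E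
    rw [hFlimx]
    simpa using hmemE
  have hle0 : volume (⋂ N, U N) ≤ 0 := h0 ▸ measure_mono hTZ
  have hpos : (0 : ℝ≥0∞) < ENNReal.ofReal (δ / 2 * r) := ENNReal.ofReal_pos.mpr (by positivity)
  exact absurd (hTvol.trans hle0) (not_le.mpr hpos)

/-- If a compact `E ⊆ ℝ²` is purely unrectifiable, then for every `r, M > 0` the
rectifiability constants `R_E(ε, r, M)` tend to zero as `ε → 0⁺`. -/
theorem stmt6 (E : Set (ℝ × ℝ)) (hE : IsCompact E)
    (hunrect : ∀ (ω₁ ω₂ : ℝ × ℝ), dot ω₁ ω₁ = 1 → dot ω₂ ω₂ = 1 → dot ω₁ ω₂ = 0 →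
      ∀ (F : ℝ → ℝ) (M : ℝ≥0), LipschitzWith M F →
        volume {x : ℝ | x • ω₁ + F x • ω₂ ∈ E} = 0) :
    ∀ r > (0 : ℝ), ∀ M > (0 : ℝ),
      Filter.Tendsto (fun ε => rectConst E ε r M)
        (nhdsWithin 0 (Set.Ioi 0)) (nhds 0) := by
  intro r hr M hM
  rw [Metric.tendsto_nhdsWithin_nhds]
  intro δ hδ
  obtain ⟨ε₀, hε₀, hlt⟩ := core E hE hunrect hr hM hδ
  refine ⟨ε₀, hε₀, fun {ε} hε hdist => ?_⟩
  have hε0 : 0 < ε := hε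
  have h1 : rectConst E ε r M ≤ rectConst E ε₀ r M := by
    apply rectConst_mono E _ hr
    have : |ε - 0| < ε₀ := by simpa [Real.dist_eq] using hdist
    have := abs_lt.1 this
    linarith [this.2]
  have h0 : 0 ≤ rectConst E ε r M := rectConst_nonneg E ε hr M
  rw [Real.dist_eq]
  rw [abs_sub_comm, abs_sub_lt_iff]
  constructor <;> linarith
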